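/- Let X be a nonempty connected, locally connected, locally compact Hausdorff topological space, and let (Y_i)_{i∈ℕ} be a countable family of closed subsets of X with ⋃_{i∈ℕ} Y_i = X, such that Y_i ∩ Y_j is small for all i ≠ j and Int(Y_i) ∩ Y_j = ∅ for all i ≠ j. Assume Y_i ≠ X for every i. Then there exists a nonempty open set U ⊆ X with compact closure such that U ∩ Y_0 = ∅ and U ∩ Y_j ≠ ∅ for infinitely many j. -/

import Mathlib

/-- A subset `A` of a topological space `X` is *small* if it is closed, has empty interior,
and does not locally disconnect `X`: for every connected open `U ⊆ X`, the set `U \ A` is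
connected (possibly empty). -/
def SmallSet {X : Type*} [TopologicalSpace X] (A : Set X) : Prop :=
  IsClosed A ∧ interior A = ∅ ∧
    ∀ U : Set X, IsOpen U → IsPreconnected U → IsPreconnected (U \ A)

theorem smallSet_empty {X : Type*} [TopologicalSpace X] : SmallSet (∅ : Set X) :=
  ⟨isClosed_empty, interior_empty, fun U _ hU => by simpa using hU⟩

theorem smallSet_union {X : Type*} [TopologicalSpace X] {A B : Set X}
    (hA : SmallSet A) (hB : SmallSet B) : SmallSet (A ∪ B) := by
  obtain ⟨hAc, hAi, hAd⟩ := hA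
  obtain ⟨hBc, hBi, hBd⟩ := hB
  refine ⟨hAc.union hBc, ?_, ?_⟩
  · have h1 : interior (A ∪ B) \ A ⊆ interior B := by
      apply interior_maximal ?_ (isOpen_interior.sdiff hAc)
      intro x hx
      rcases interior_subset hx.1 with h | h
      · exact absurd h hx.2
      · exact h
    rw [hBi, Set.subset_empty_iff, Set.diff_eq_empty] at h1
    have h2 := interior_maximal h1 isOpen_interior
    rw [hAi, Set.subset_empty_iff] at h2
    exact h2
  · intro U hUo hUc
    rw [← Set.diff_diff]
    exact hBd (U \ A) (hUo.sdiff hAc) (hAd U hUo hUc)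

theorem smallSet_biUnion {X ι : Type*} [TopologicalSpace X] (s : Finset ι) (f : ι → Set X)
    (h : ∀ i ∈ s, SmallSet (f i)) : SmallSet (⋃ i ∈ s, f i) := by
  classical
  induction s using Finset.induction_on with
  | empty => simpa using smallSet_empty
  | insert _ _ hx ih =>
    rw [Finset.set_biUnion_insert]
    exact smallSet_union (h _ (Finset.mem_insert_self _ _))
      (ih fun i hi => h i (Finset.mem_insert_of_mem hi))

/-- The key lemma in the generalized Sierpinski theorem: given a countable closed cover
`(Y i)` of a nonempty connected, locally connected, locally compact Hausdorff space,
with small pairwise intersections, `interior (Y i) ∩ Y j = ∅` for `i ≠ j`, and no `Y i`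
equal to the whole space, there is a nonempty precompact open set `U` disjoint from `Y 0`
and meeting infinitely many of the `Y j`. -/
theorem stmt12 (X : Type*) [TopologicalSpace X] [Nonempty X] [ConnectedSpace X]
    [LocallyConnectedSpace X] [LocallyCompactSpace X] [T2Space X]
    (Y : ℕ → Set X) (hclosed : ∀ i, IsClosed (Y i))
    (hcover : ⋃ i, Y i = Set.univ)
    (hsmall : ∀ i j, i ≠ j → SmallSet (Y i ∩ Y j))
    (hint : ∀ i j, i ≠ j → interior (Y i) ∩ Y j = ∅)
    (hne : ∀ i, Y i ≠ Set.univ) :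
    ∃ U : Set X, IsOpen U ∧ U.Nonempty ∧ IsCompact (closure U) ∧
      U ∩ Y 0 = ∅ ∧ {j : ℕ | (U ∩ Y j).Nonempty}.Infinite := by
  classical
  by_contra hcon
  push_neg at hcon
  have hcon' : ∀ U : Set X, IsOpen U → U.Nonempty → IsCompact (closure U) →
      U ∩ Y 0 = ∅ → {j : ℕ | (U ∩ Y j).Nonempty}.Finite := by
    intro U h1 h2 h3 h4
    exact hcon U h1 h2 h3 h4
  -- Step 1: every point outside Y 0 is in the interior of some Y j with j ≠ 0
  have key : ∀ x : X, x ∉ Y 0 → ∃ j, j ≠ 0 ∧ x ∈ interior (Y j) := by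
    intro x hx
    have hO : IsOpen (Y 0)ᶜ := (hclosed 0).isOpen_compl
    have hxO : (Y 0)ᶜ ∈ nhds x := hO.mem_nhds hx
    obtain ⟨K, hKn, hKsub, hKc⟩ := local_compact_nhds hxO
    set U : Set X := connectedComponentIn (interior K) x with hUdef
    have hxint : x ∈ interior K := mem_interior_iff_mem_nhds.2 hKn
    have hUopen : IsOpen U := isOpen_interior.connectedComponentIn
    have hxU : x ∈ U := mem_connectedComponentIn hxint
    have hUconn : IsPreconnected U := (isConnected_connectedComponentIn_iff.2 hxint).isPreconnected
    have hUK : U ⊆ K := (connectedComponentIn_subset _ _).trans interior_subset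
    have hclosU : closure U ⊆ K := hKc.isClosed.closure_subset_iff.2 hUK
    have hUcomp : IsCompact (closure U) := hKc.of_isClosed_subset isClosed_closure hclosU
    have hUY0 : U ∩ Y 0 = ∅ := by
      apply Set.eq_empty_iff_forall_notMem.2
      intro y hy
      exact hKsub (hUK hy.1) hy.2
    have hF : {j : ℕ | (U ∩ Y j).Nonempty}.Finite :=
      hcon' U hUopen ⟨x, hxU⟩ hUcomp hUY0
    set s : Finset (ℕ × ℕ) :=
      (hF.toFinset ×ˢ hF.toFinset).filter (fun p => p.1 ≠ p.2) with hsdef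
    set Z : Set X := ⋃ p ∈ s, Y p.1 ∩ Y p.2 with hZdef
    have hZ : SmallSet Z := by
      apply smallSet_biUnion
      intro p hp
      rw [hsdef, Finset.mem_filter] at hp
      exact hsmall p.1 p.2 hp.2
    -- membership in Z from a pair
    have hZmem : ∀ i j : ℕ, i ∈ hF.toFinset → j ∈ hF.toFinset → i ≠ j →
        Y i ∩ Y j ⊆ Z := by
      intro i j hi hj hij
      intro y hy
      rw [hZdef]
      have hps : ((i, j) : ℕ × ℕ) ∈ s := by
        rw [hsdef, Finset.mem_filter, Finset.mem_product]
        exact ⟨⟨hi, hj⟩, hij⟩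
      exact Set.mem_biUnion hps hy
    -- small open subsets of U are not inside Z
    have hnotsub : ∀ W : Set X, IsOpen W → W.Nonempty → ¬ W ⊆ Z := by
      intro W hWo hWne hWZ
      have := interior_maximal hWZ hWo
      rw [hZ.2.1, Set.subset_empty_iff] at this
      rw [this] at hWne
      exact Set.not_nonempty_empty hWne
    obtain ⟨x0, hx0U, hx0Z⟩ := Set.not_subset.1 (hnotsub U hUopen ⟨x, hxU⟩)
    obtain ⟨j0, hx0Y⟩ : ∃ j0, x0 ∈ Y j0 := by
      have : x0 ∈ ⋃ i, Y i := by rw [hcover]; trivial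
      exact Set.mem_iUnion.1 this
    have hj0F : j0 ∈ hF.toFinset := by
      rw [Set.Finite.mem_toFinset]
      exact ⟨x0, hx0U, hx0Y⟩
    -- U \ Z ⊆ Y j0
    have hsub : U \ Z ⊆ Y j0 := by
      have hpre : IsPreconnected (U \ Z) := hZ.2.2 U hUopen hUconn
      set O1 : Set X := (⋃ j ∈ hF.toFinset.erase j0, Y j)ᶜ with hO1
      set O2 : Set X := (Y j0)ᶜ with hO2
      have hO1c : IsClosed (⋃ j ∈ hF.toFinset.erase j0, Y j) :=
        Set.Finite.isClosed_biUnion (Finset.finite_toSet _) (fun j _ => hclosed j)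
      have hO1o : IsOpen O1 := hO1c.isOpen_compl
      have hO2o : IsOpen O2 := (hclosed j0).isOpen_compl
      have hcov : U \ Z ⊆ O1 ∪ O2 := by
        intro y hy
        by_cases hyj0 : y ∈ Y j0
        · left
          rw [hO1, Set.mem_compl_iff]
          intro hyU
          obtain ⟨j, hjmem, hyYj⟩ := Set.mem_iUnion₂.1 hyU
          have hjne : j ≠ j0 := Finset.ne_of_mem_erase hjmem
          have hjF : j ∈ hF.toFinset := Finset.mem_of_mem_erase hjmem
          exact hy.2 (hZmem j j0 hjF hj0F hjne ⟨hyYj, hyj0⟩)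
        · right; exact hyj0
      have hdisj : (U \ Z) ∩ (O1 ∩ O2) = ∅ := by
        apply Set.eq_empty_iff_forall_notMem.2
        intro y ⟨hyUZ, hyO1, hyO2⟩
        obtain ⟨j, hyYj⟩ : ∃ j, y ∈ Y j := by
          have : y ∈ ⋃ i, Y i := by rw [hcover]; trivial
          exact Set.mem_iUnion.1 this
        have hjF : j ∈ hF.toFinset := by
          rw [Set.Finite.mem_toFinset]
          exact ⟨y, hyUZ.1, hyYj⟩
        have hjne : j ≠ j0 := by
          intro h; rw [h] at hyYj; exact hyO2 hyYj
        apply hyO1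
        exact Set.mem_biUnion (Finset.mem_erase.2 ⟨hjne, hjF⟩) hyYj
      have hx0O1 : x0 ∈ O1 := by
        rw [hO1, Set.mem_compl_iff]
        intro hyU
        obtain ⟨j, hjmem, hyYj⟩ := Set.mem_iUnion₂.1 hyU
        have hjne : j ≠ j0 := Finset.ne_of_mem_erase hjmem
        have hjF : j ∈ hF.toFinset := Finset.mem_of_mem_erase hjmem
        exact hx0Z (hZmem j j0 hjF hj0F hjne ⟨hyYj, hx0Y⟩)
      intro y hy
      by_contra hyY
      have hne1 : ((U \ Z) ∩ O1).Nonempty := ⟨x0, ⟨hx0U, hx0Z⟩, hx0O1⟩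
      have hne2 : ((U \ Z) ∩ O2).Nonempty := ⟨y, hy, hyY⟩
      obtain ⟨w, hw⟩ := hpre O1 O2 hO1o hO2o hcov hne1 hne2
      rw [Set.eq_empty_iff_forall_notMem] at hdisj
      exact hdisj w ⟨hw.1, hw.2⟩
    -- now U ⊆ Y j0 since U \ Z is dense in U
    have hUY : U ⊆ Y j0 := by
      intro u hu
      have hucl : u ∈ closure (U \ Z) := by
        rw [mem_closure_iff]
        intro o ho huo
        have honU : IsOpen (o ∩ U) := ho.inter hUopen
        obtain ⟨w, hwoU, hwZ⟩ := Set.not_subset.1 (hnotsub (o ∩ U) honU ⟨u, huo, hu⟩)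
        exact ⟨w, hwoU.1, hwoU.2, hwZ⟩
      have : closure (U \ Z) ⊆ Y j0 := (hclosed j0).closure_subset_iff.2 hsub
      exact this hucl
    have hj0ne : j0 ≠ 0 := by
      intro h
      rw [h] at hUY
      exact absurd (hUY hxU) hx
    exact ⟨j0, hj0ne, interior_maximal hUY hUopen hxU⟩
  -- Step 2: use a nonempty interior to get a contradiction
  obtain ⟨x, hx⟩ := (Set.ne_univ_iff_exists_notMem _).1 (hne 0)
  obtain ⟨j, hjne, hxV⟩ := key x hx
  set V : Set X := interior (Y j) with hVdef
  set A : Set X := Y 0 ∩ Y j with hAdef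
  have hA : SmallSet A := hsmall 0 j (Ne.symm hjne)
  have hpre : IsPreconnected (Set.univ \ A) :=
    hA.2.2 Set.univ isOpen_univ isPreconnected_univ
  -- frontier of V is inside A
  have hfr : closure V \ V ⊆ A := by
    intro y ⟨hyc, hyV⟩
    have hyYj : y ∈ Y j := by
      have : closure V ⊆ Y j := (hclosed j).closure_subset_iff.2 interior_subset
      exact this hyc
    by_cases hy0 : y ∈ Y 0
    · exact ⟨hy0, hyYj⟩
    · exfalso
      obtain ⟨i, hine, hyVi⟩ := key y hy0
      by_cases hij : i = j
      · rw [hij] at hyVi; exact hyV hyVi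
      · have := hint i j hij
        rw [Set.eq_empty_iff_forall_notMem] at this
        exact this y ⟨hyVi, hyYj⟩
  -- V is clopen in univ \ A, which is preconnected, so univ \ A ⊆ closure V
  have hsub : Set.univ \ A ⊆ closure V := by
    set O1 : Set X := V with hO1
    set O2 : Set X := (closure V)ᶜ with hO2
    have hcov : Set.univ \ A ⊆ O1 ∪ O2 := by
      intro y hy
      by_cases hyc : y ∈ closure V
      · left
        by_contra hyV
        exact hy.2 (hfr ⟨hyc, hyV⟩)
      · right; exact hyc
    have hVA : x ∈ Set.univ \ A := ⟨trivial, fun h => hx h.1⟩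
    intro y hy
    by_contra hyc
    have hne1 : ((Set.univ \ A) ∩ O1).Nonempty := ⟨x, hVA, hxV⟩
    have hne2 : ((Set.univ \ A) ∩ O2).Nonempty := ⟨y, hy, hyc⟩
    obtain ⟨w, hw1, hw2, hw3⟩ := hpre O1 O2 isOpen_interior
      (isClosed_closure.isOpen_compl) hcov hne1 hne2
    exact hw3 (subset_closure hw2)
  -- conclude Y j = univ, contradiction
  apply hne j
  apply Set.eq_univ_of_univ_subset
  intro y _
  by_cases hyA : y ∈ A
  · exact hyA.2
  · have : y ∈ closure V := hsub ⟨trivial, hyA⟩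
    exact ((hclosed j).closure_subset_iff.2 interior_subset) this
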